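/- Let Y be a finite set of at least two distinct unit vectors in ℝ³ and let α = max{⟨x,y⟩ : x, y ∈ Y, x ≠ y} (so α < 1). Then for every x ∈ Y, the number of points y ∈ Y with ⟨x,y⟩ = α is at most 5. -/

import Mathlib

open scoped RealInnerProductSpace
open Real

private lemma cos_gap {d : ℝ} (h0 : 0 < d) (h2 : d < 2 * π) (hc : Real.cos d < 1/2) :
    π/3 < d ∧ d < 5 * π/3 := by
  have hpi := Real.pi_pos
  constructor
  · by_contra h
    push_neg at h
    have h1 : Real.cos (π/3) ≤ Real.cos d := by
      rcases eq_or_lt_of_le h with h' | h'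
      · rw [h']
      · exact le_of_lt (Real.strictAntiOn_cos ⟨le_of_lt h0, by linarith⟩
          ⟨by positivity, by linarith⟩ h')
    rw [Real.cos_pi_div_three] at h1; linarith
  · by_contra h
    push_neg at h
    have he : Real.cos (2 * π - d) = Real.cos d := by
      rw [Real.cos_sub, Real.cos_two_pi, Real.sin_two_pi]; ring
    have h1 : Real.cos (π/3) ≤ Real.cos (2 * π - d) := by
      rcases eq_or_lt_of_le (show 2 * π - d ≤ π/3 by linarith) with h' | h'
      · rw [h']
      · exact le_of_lt (Real.strictAntiOn_cos ⟨by linarith, by linarith⟩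
          ⟨by positivity, by linarith⟩ h')
    rw [he, Real.cos_pi_div_three] at h1; linarith

private lemma six_angles (θ : Fin 6 → ℝ) (hmem : ∀ i, θ i ∈ Set.Ioc (-π) π)
    (h : ∀ i j, i ≠ j → Real.cos (θ i - θ j) < 1/2) : False := by
  have hpi := Real.pi_pos
  have hinj : Function.Injective θ := by
    intro i j hij
    by_contra hne
    have := h i j hne
    rw [hij, sub_self, Real.cos_zero] at this; linarith
  set g : Fin 6 → ℝ := θ ∘ Tuple.sort θ with hg
  have hmono : StrictMono g :=
    (Tuple.monotone_sort θ).strictMono_of_injective (hinj.comp (Equiv.injective _))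
  have hgmem : ∀ i, g i ∈ Set.Ioc (-π) π := fun i => hmem _
  have hgap : ∀ i j : Fin 6, i < j → π/3 < g j - g i ∧ g j - g i < 5 * π/3 := by
    intro i j hij
    have h0 : 0 < g j - g i := sub_pos.2 (hmono hij)
    have hi := hgmem i; have hj := hgmem j
    simp only [Set.mem_Ioc] at hi hj
    have h2 : g j - g i < 2 * π := by linarith
    have hc : Real.cos (g j - g i) < 1/2 := by
      have hne : Tuple.sort θ j ≠ Tuple.sort θ i :=
        fun e => absurd ((Tuple.sort θ).injective e) hij.ne'
      simpa [hg] using h (Tuple.sort θ j) (Tuple.sort θ i) hne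
    exact cos_gap h0 h2 hc
  have h01 := (hgap 0 1 (by decide)).1
  have h12 := (hgap 1 2 (by decide)).1
  have h23 := (hgap 2 3 (by decide)).1
  have h34 := (hgap 3 4 (by decide)).1
  have h45 := (hgap 4 5 (by decide)).1
  have h05 := (hgap 0 5 (by decide)).2
  linarith

private lemma inner_complex_cos (z w : ℂ) :
    ⟪z, w⟫ = ‖z‖ * ‖w‖ * Real.cos (w.arg - z.arg) := by
  rw [Complex.inner]
  conv_lhs => rw [← Complex.norm_mul_exp_arg_mul_I z, ← Complex.norm_mul_exp_arg_mul_I w]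
  rw [map_mul, Complex.conj_ofReal, ← Complex.exp_conj]
  have hc : (starRingEnd ℂ) (↑z.arg * Complex.I) = ↑(-z.arg) * Complex.I := by
    simp [Complex.conj_I, Complex.ofReal_neg]
    try ring
  rw [hc]
  have key : (↑(‖z‖) * Complex.exp (↑(-z.arg) * Complex.I)) *
      (↑(‖w‖) * Complex.exp (↑w.arg * Complex.I)) =
      ↑(‖z‖ * ‖w‖) * Complex.exp (↑(w.arg - z.arg) * Complex.I) := by
    rw [mul_mul_mul_comm, ← Complex.exp_add, ← Complex.ofReal_mul]
    congr 1
    push_cast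
    ring
  rw [mul_comm, key, Complex.re_ofReal_mul, Complex.exp_ofReal_mul_I_re]

/-- For a finite set `Y` of at least two unit vectors in `ℝ³` with maximum pairwise inner
product `α` (so `α < 1`), every `x ∈ Y` has at most `5` points `y ∈ Y` with `⟪x, y⟫ = α`. -/
theorem stmt_2 (Y : Finset (EuclideanSpace ℝ (Fin 3))) (hY : 2 ≤ Y.card)
    (hunit : ∀ x ∈ Y, ‖x‖ = 1) (α : ℝ)
    (hα : IsGreatest {r : ℝ | ∃ x ∈ Y, ∃ y ∈ Y, x ≠ y ∧ ⟪x, y⟫ = r} α) :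
    α < 1 ∧ ∀ x ∈ Y, Set.ncard {y : EuclideanSpace ℝ (Fin 3) | y ∈ Y ∧ ⟪x, y⟫ = α} ≤ 5 := by
  classical
  obtain ⟨hmem, hub⟩ := hα
  obtain ⟨x₀, hx₀, y₀, hy₀, hne₀, hin₀⟩ := hmem
  have hα1 : α < 1 := by
    have h1 : ‖x₀ - y₀‖ ^ 2 = 2 - 2 * α := by
      rw [norm_sub_sq_real, hin₀, hunit _ hx₀, hunit _ hy₀]; ring
    have h2 : 0 < ‖x₀ - y₀‖ ^ 2 :=
      pow_pos (norm_pos_iff.2 (sub_ne_zero.2 hne₀)) 2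
    linarith
  have hαm1 : -1 ≤ α := by
    have h1 : ‖x₀ + y₀‖ ^ 2 = 2 + 2 * α := by
      rw [norm_add_sq_real, hin₀, hunit _ hx₀, hunit _ hy₀]; ring
    nlinarith [sq_nonneg ‖x₀ + y₀‖]
  refine ⟨hα1, ?_⟩
  intro x hx
  have hSet : {y : EuclideanSpace ℝ (Fin 3) | y ∈ Y ∧ ⟪x, y⟫ = α} =
      ↑(Y.filter (fun y => ⟪x, y⟫ = α)) := by
    ext y; simp [Finset.mem_filter]
  rw [hSet, Set.ncard_coe_finset]
  by_contra hcard
  push_neg at hcard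
  obtain ⟨T, hTsub, hT6⟩ := Finset.exists_subset_card_eq
    (show 6 ≤ (Y.filter (fun y => ⟪x, y⟫ = α)).card by omega)
  let e := Finset.equivFinOfCardEq hT6
  set f : Fin 6 → EuclideanSpace ℝ (Fin 3) := fun i => (e.symm i : EuclideanSpace ℝ (Fin 3))
    with hf
  have hfinj : Function.Injective f := fun i j h => e.symm.injective (Subtype.ext h)
  have hfY : ∀ i, f i ∈ Y ∧ ⟪x, f i⟫ = α := by
    intro i
    have h1 := hTsub (e.symm i).2
    simpa [Finset.mem_filter] using h1
  have hfle : ∀ i j, i ≠ j → ⟪f i, f j⟫ ≤ α := fun i j hij =>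
    hub ⟨f i, (hfY i).1, f j, (hfY j).1, fun hh => hij (hfinj hh), rfl⟩
  have hfn : ∀ i, ‖f i‖ = 1 := fun i => hunit _ (hfY i).1
  have hxn : ‖x‖ = 1 := hunit _ hx
  rcases eq_or_lt_of_le hαm1 with hm1 | hm1
  · have key : ∀ i : Fin 6, f i = -x := by
      intro i
      have h1 : ‖x + f i‖ ^ 2 = 0 := by
        rw [norm_add_sq_real, (hfY i).2, hxn, hfn i, ← hm1]; ring
      have h2 : x + f i = 0 := by
        have := pow_eq_zero_iff (n := 2) (by norm_num) |>.1 h1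
        exact norm_eq_zero.1 this
      exact eq_neg_of_add_eq_zero_right h2
    have h01 : (0 : Fin 6) ≠ 1 := by decide
    exact h01 (hfinj ((key 0).trans (key 1).symm))
  · have hx0 : x ≠ 0 := by
      intro h; rw [h, norm_zero] at hxn; norm_num at hxn
    haveI : Fact (Module.finrank ℝ (EuclideanSpace ℝ (Fin 3)) = 2 + 1) :=
      ⟨by simp [finrank_euclideanSpace]⟩
    let B := OrthonormalBasis.fromOrthogonalSpanSingleton (𝕜 := ℝ) 2 hx0
    let L := Complex.isometryOfOrthonormal B
    have hw : ∀ i, f i - α • x ∈ (ℝ ∙ x)ᗮ := by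
      intro i
      rw [Submodule.mem_orthogonal_singleton_iff_inner_right]
      rw [inner_sub_right, real_inner_smul_right, (hfY i).2,
        real_inner_self_eq_norm_sq, hxn]
      ring
    set z : Fin 6 → ℂ := fun i => L.symm ⟨f i - α • x, hw i⟩ with hz
    have hzin : ∀ i j, ⟪z i, z j⟫ = ⟪f i - α • x, f j - α • x⟫ := by
      intro i j
      simp only [hz]
      rw [LinearIsometryEquiv.inner_map_map]
      rfl
    have winner : ∀ i j, ⟪f i - α • x, f j - α • x⟫ = ⟪f i, f j⟫ - α ^ 2 := by
      intro i j
      have e1 : ⟪f i, x⟫ = α := by rw [real_inner_comm]; exact (hfY i).2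
      rw [inner_sub_left, inner_sub_right, inner_sub_right, real_inner_smul_left,
        real_inner_smul_left, real_inner_smul_right, real_inner_smul_right,
        e1, (hfY j).2, real_inner_self_eq_norm_sq, hxn]
      ring
    have hzsq : ∀ i, ‖z i‖ = Real.sqrt (1 - α ^ 2) := by
      intro i
      have h1 : ⟪z i, z i⟫ = 1 - α ^ 2 := by
        rw [hzin, winner, real_inner_self_eq_norm_sq, hfn]; ring
      have h2 : ‖z i‖ ^ 2 = 1 - α ^ 2 := by
        rw [← h1, real_inner_self_eq_norm_sq]
      rw [← h2, Real.sqrt_sq (norm_nonneg _)]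
    have hr2 : Real.sqrt (1 - α ^ 2) * Real.sqrt (1 - α ^ 2) = 1 - α ^ 2 :=
      Real.mul_self_sqrt (by nlinarith)
    have hcos : ∀ i j, i ≠ j → Real.cos ((z i).arg - (z j).arg) < 1/2 := by
      intro i j hij
      have h1 : ⟪z j, z i⟫ = (1 - α ^ 2) * Real.cos ((z i).arg - (z j).arg) := by
        rw [inner_complex_cos, hzsq, hzsq, hr2]
      have h2 : ⟪z j, z i⟫ ≤ α - α ^ 2 := by
        rw [hzin, winner]; linarith [hfle j i hij.symm]
      rw [h1] at h2
      by_contra hcc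
      push_neg at hcc
      nlinarith [sq_nonneg (1 - α)]
    exact six_angles (fun i => (z i).arg) (fun i => Complex.arg_mem_Ioc _) hcos
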